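/- Let X be a faithful spherical embedding of a symmetric association scheme 𝔛 with respect to the primitive idempotent E_1, and let R_1 ≠ R_0 be a relation of 𝔛 with valency k_1 = 1 such that R_1 is contained in the maximum inner product relation Γ_α. Then |X| = 2. -/

import Mathlib

open scoped RealInnerProductSpace

/-- A symmetric association scheme of class `d` on a finite set `X`: a partition of `X × X`
into nonempty relations `R 0, …, R d` with `R 0` the diagonal, each `R i` symmetric, and
well-defined intersection numbers `p^k_{ij}`. -/
structure AssocScheme (X : Type*) [Fintype X] [DecidableEq X] (d : ℕ) where
  R : Fin (d + 1) → X → X → Prop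
  R_zero : ∀ x y : X, R 0 x y ↔ x = y
  R_symm : ∀ (i : Fin (d + 1)) (x y : X), R i x y → R i y x
  R_partition : ∀ x y : X, ∃! i : Fin (d + 1), R i x y
  R_nonempty : ∀ i : Fin (d + 1), ∃ x y : X, R i x y
  pnum : ∀ i j k : Fin (d + 1), ∃ p : ℕ, ∀ x y : X, R k x y →
    Set.ncard {z : X | R i x z ∧ R j z y} = p

variable {X : Type*} [Fintype X] [DecidableEq X] {d : ℕ}

open Classical in
/-- The adjacency matrix of the `i`-th relation of the scheme. -/
noncomputable def AssocScheme.adj (S : AssocScheme X d) (i : Fin (d + 1)) : Matrix X X ℝ :=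
  Matrix.of fun x y => if S.R i x y then (1 : ℝ) else 0

/-- Membership in the Bose–Mesner algebra (the real span of the adjacency matrices). -/
def AssocScheme.inBM (S : AssocScheme X d) (M : Matrix X X ℝ) : Prop :=
  ∃ c : Fin (d + 1) → ℝ, M = ∑ i : Fin (d + 1), c i • S.adj i

/-- The spherical embedding with respect to an idempotent `E`:
`x ↦ √(|X| / rank E) • (E φₓ)`, viewed as a point of the Euclidean space `ℝ^X`
(`φₓ` is the characteristic column vector of `x`, so `E φₓ` is the `x`-th column of `E`). -/
noncomputable def sphEmb (E : Matrix X X ℝ) (x : X) : EuclideanSpace ℝ X :=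
  (WithLp.equiv 2 (X → ℝ)).symm
    fun y => Real.sqrt ((Fintype.card X : ℝ) / (E.rank : ℝ)) * E y x

open Matrix

lemma aux_inBM_iff (S : AssocScheme X d) (M : Matrix X X ℝ) :
    S.inBM M ↔ M ∈ Submodule.span ℝ (Set.range S.adj) := by
  rw [Submodule.mem_span_range_iff_exists_fun]
  constructor
  · rintro ⟨c, rfl⟩; exact ⟨c, rfl⟩
  · rintro ⟨c, h⟩; exact ⟨c, h.symm⟩

lemma aux_adj_transpose (S : AssocScheme X d) (i : Fin (d + 1)) :
    (S.adj i)ᵀ = S.adj i := by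
  ext x y
  simp only [Matrix.transpose_apply, AssocScheme.adj, Matrix.of_apply]
  by_cases h : S.R i x y
  · rw [if_pos h, if_pos (S.R_symm _ _ _ h)]
  · rw [if_neg h, if_neg (fun h' => h (S.R_symm _ _ _ h'))]

lemma aux_inBM_transpose {S : AssocScheme X d} {M : Matrix X X ℝ}
    (h : S.inBM M) : Mᵀ = M := by
  obtain ⟨c, rfl⟩ := h
  rw [Matrix.transpose_sum]
  exact Finset.sum_congr rfl fun i _ => by
    rw [Matrix.transpose_smul, aux_adj_transpose]

/-- If `X` has a faithful spherical embedding with respect to a primitive idempotent `E₁`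
and `R₁ ≠ R₀` is a relation with valency `k₁ = 1` contained in the maximum inner product
relation `Γ_α`, then `|X| = 2`. -/
theorem stmt_8 (S : AssocScheme X d) (E : Matrix X X ℝ)
    (hBM : S.inBM E) (hIdem : E * E = E)
    (hPrim : ∀ F : Matrix X X ℝ, S.inBM F → F * F = F → E * F = F → F = 0 ∨ F = E)
    (hFaithful : Function.Injective (sphEmb E))
    (hne : S.R 1 ≠ S.R 0)
    (hk : ∀ x : X, Set.ncard {y : X | S.R 1 x y} = 1)
    (α : ℝ)
    (hα : IsGreatest {r : ℝ | ∃ x y : X, x ≠ y ∧ ⟪(sphEmb E x), (sphEmb E y)⟫ = r} α)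
    (hsub : ∀ x y : X, S.R 1 x y → x ≠ y ∧ ⟪(sphEmb E x), (sphEmb E y)⟫ = α) :
    Fintype.card X = 2 := by
  classical
  -- the matching σ given by the valency-one relation R₁
  choose σ hσ using fun x => Set.ncard_eq_one.mp (hk x)
  have hR1 : ∀ x y : X, S.R 1 x y ↔ y = σ x := by
    intro x y
    rw [← Set.mem_singleton_iff, ← hσ x]
    rfl
  have h10 : (1 : Fin (d + 1)) ≠ 0 := fun h => hne (by rw [h])
  have hRa : ∀ x : X, S.R 1 x (σ x) := fun x => (hR1 x (σ x)).mpr rfl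
  have hR1' : ∀ x y : X, S.R 1 x y ↔ x = σ y := by
    intro x y
    constructor
    · intro h; exact (hR1 y x).mp (S.R_symm _ _ _ h)
    · intro h; exact S.R_symm _ _ _ ((hR1 y x).mpr h)
  have hσσ : ∀ x, σ (σ x) = x := fun x => ((hR1 (σ x) x).mp (S.R_symm _ _ _ (hRa x))).symm
  have hσne : ∀ x, σ x ≠ x := by
    intro x h
    have h0 : S.R 0 x x := (S.R_zero x x).mpr rfl
    have h1 : S.R 1 x x := (hR1 x x).mpr h.symm
    obtain ⟨i, -, hu⟩ := S.R_partition x x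
    exact h10 ((hu 1 h1).trans (hu 0 h0).symm)
  -- adjacency matrix of R₁ is the permutation matrix of σ
  have hadj1 : ∀ z y : X, S.adj 1 z y = if z = σ y then (1 : ℝ) else 0 := by
    intro z y
    simp only [AssocScheme.adj, Matrix.of_apply]
    by_cases h : z = σ y
    · rw [if_pos ((hR1' z y).mpr h), if_pos h]
    · rw [if_neg (fun h' => h ((hR1' z y).mp h')), if_neg h]
  have hmulA : ∀ (M : Matrix X X ℝ) (x y : X), (M * S.adj 1) x y = M x (σ y) := by
    intro M x y
    rw [Matrix.mul_apply]
    simp [hadj1, mul_ite]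
  have hA2 : S.adj 1 * S.adj 1 = 1 := by
    ext x y
    rw [hmulA, hadj1, hσσ, Matrix.one_apply]
  -- the Bose–Mesner algebra is closed under multiplication by adj 1
  have hBMclosed : ∀ M, S.inBM M → S.inBM (M * S.adj 1) := by
    intro M hM
    have key : ∀ i : Fin (d + 1), S.inBM (S.adj i * S.adj 1) := by
      intro i
      choose p hp using fun k => S.pnum i 1 k
      refine ⟨fun k => (p k : ℝ), ?_⟩
      ext x y
      obtain ⟨k₀, hk₀, hu⟩ := S.R_partition x y
      have hsum : (∑ k, (p k : ℝ) • S.adj k) x y = (p k₀ : ℝ) := by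
        rw [Matrix.sum_apply]
        rw [Finset.sum_eq_single k₀]
        · simp [AssocScheme.adj, hk₀]
        · intro k _ hkne
          have : ¬ S.R k x y := fun h => hkne (hu k h)
          simp [AssocScheme.adj, this]
        · simp
      rw [hsum, hmulA]
      have hset : {z : X | S.R i x z ∧ S.R 1 z y} =
          if S.R i x (σ y) then {σ y} else (∅ : Set X) := by
        ext z
        by_cases h : S.R i x (σ y)
        · simp only [if_pos h, Set.mem_singleton_iff, Set.mem_setOf_eq]
          constructor
          · rintro ⟨-, h1⟩; exact (hR1' z y).mp h1
          · rintro rfl; exact ⟨h, (hR1' _ y).mpr rfl⟩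
        · simp only [if_neg h, Set.mem_empty_iff_false, Set.mem_setOf_eq, iff_false, not_and]
          intro hi h1
          exact h (((hR1' z y).mp h1) ▸ hi)
      have hcard := hp k₀ x y hk₀
      rw [hset] at hcard
      by_cases h : S.R i x (σ y)
      · rw [if_pos h, Set.ncard_singleton] at hcard
        simp [AssocScheme.adj, h, ← hcard]
      · rw [if_neg h, Set.ncard_empty] at hcard
        simp [AssocScheme.adj, h, ← hcard]
    obtain ⟨c, rfl⟩ := hM
    rw [Finset.sum_mul]
    rw [aux_inBM_iff]
    refine Submodule.sum_mem _ fun i _ => ?_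
    rw [Matrix.smul_mul]
    exact Submodule.smul_mem _ _ ((aux_inBM_iff S _).mp (key i))
  -- E commutes with adj 1
  have hET : Eᵀ = E := aux_inBM_transpose hBM
  have hEA_BM : S.inBM (E * S.adj 1) := hBMclosed E hBM
  have hcomm : S.adj 1 * E = E * S.adj 1 := by
    conv_lhs => rw [← aux_adj_transpose S 1, ← hET, ← Matrix.transpose_mul,
      aux_inBM_transpose hEA_BM]
  -- the auxiliary idempotent F = (E + E A₁)/2
  have hF_BM : S.inBM ((2⁻¹ : ℝ) • (E + E * S.adj 1)) := by
    rw [aux_inBM_iff]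
    exact Submodule.smul_mem _ _
      (Submodule.add_mem _ ((aux_inBM_iff S _).mp hBM) ((aux_inBM_iff S _).mp hEA_BM))
  have e1 : E * (E * S.adj 1) = E * S.adj 1 := by rw [← mul_assoc, hIdem]
  have e2 : (E * S.adj 1) * E = E * S.adj 1 := by
    calc (E * S.adj 1) * E = E * (S.adj 1 * E) := mul_assoc _ _ _
      _ = E * (E * S.adj 1) := by rw [hcomm]
      _ = (E * E) * S.adj 1 := (mul_assoc _ _ _).symm
      _ = E * S.adj 1 := by rw [hIdem]
  have e3 : (E * S.adj 1) * (E * S.adj 1) = E := by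
    calc (E * S.adj 1) * (E * S.adj 1)
        = E * (S.adj 1 * (E * S.adj 1)) := mul_assoc _ _ _
      _ = E * ((S.adj 1 * E) * S.adj 1) := by rw [← mul_assoc (S.adj 1) E (S.adj 1)]
      _ = E * ((E * S.adj 1) * S.adj 1) := by rw [hcomm]
      _ = E * (E * (S.adj 1 * S.adj 1)) := by rw [mul_assoc E (S.adj 1) (S.adj 1)]
      _ = E * (E * 1) := by rw [hA2]
      _ = E := by rw [mul_one, hIdem]
  have hFF : ((2⁻¹ : ℝ) • (E + E * S.adj 1)) * ((2⁻¹ : ℝ) • (E + E * S.adj 1)) =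
      (2⁻¹ : ℝ) • (E + E * S.adj 1) := by
    rw [Matrix.smul_mul, Matrix.mul_smul, smul_smul, add_mul, mul_add, mul_add,
      hIdem, e1, e2, e3]
    module
  have hEF : E * ((2⁻¹ : ℝ) • (E + E * S.adj 1)) = (2⁻¹ : ℝ) • (E + E * S.adj 1) := by
    rw [Matrix.mul_smul, mul_add, hIdem, e1]
  -- get a point of X
  obtain ⟨a, y0, -⟩ := S.R_nonempty 1
  rcases hPrim _ hF_BM hFF hEF with hF0 | hFE
  · -- case F = 0 : E A₁ = -E, all embedded points are mutually antipodal
    have hEA : E * S.adj 1 = -E := by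
      have h := (smul_eq_zero.mp hF0).resolve_left (by norm_num)
      linear_combination (norm := module) h
    set t : ℝ := (Fintype.card X : ℝ) / (E.rank : ℝ) with ht
    have htnn : 0 ≤ t := div_nonneg (Nat.cast_nonneg _) (Nat.cast_nonneg _)
    have hExz : ∀ x z : X, E z x = E x z := by
      intro x z
      conv_rhs => rw [← hET]
      exact (Matrix.transpose_apply E x z).symm
    have hinner : ∀ x y : X, ⟪sphEmb E x, sphEmb E y⟫ = t * E x y := by
      intro x y
      simp only [sphEmb, PiLp.inner_apply, WithLp.equiv_symm_apply, WithLp.ofLp_toLp, RCLike.inner_apply,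
        conj_trivial, ← ht]
      simp only [mul_comm (Real.sqrt t * E _ y)]
      have : ∀ z : X, (Real.sqrt t * E z x) * (Real.sqrt t * E z y)
          = (Real.sqrt t * Real.sqrt t) * (E x z * E z y) := by
        intro z; rw [hExz x z]; ring
      rw [Finset.sum_congr rfl fun z _ => this z, ← Finset.mul_sum,
        Real.mul_self_sqrt htnn, ← Matrix.mul_apply, hIdem]
    -- the diagonal of E is constant
    have hdiag : ∀ x y : X, E x x = E y y := by
      obtain ⟨c, hc⟩ := hBM
      have key : ∀ x : X, E x x = c 0 := by
        intro x
        rw [hc, Matrix.sum_apply]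
        rw [Finset.sum_eq_single 0]
        · simp [AssocScheme.adj, (S.R_zero x x).mpr rfl]
        · intro i _ hine
          have : ¬ S.R i x x := by
            intro h
            obtain ⟨j, -, hu⟩ := S.R_partition x x
            exact hine ((hu i h).trans (hu 0 ((S.R_zero x x).mpr rfl)).symm)
          simp [AssocScheme.adj, this]
        · simp
      intro x y; rw [key x, key y]
    have hnorm : ∀ x : X, ‖sphEmb E x‖ ^ 2 = t * E a a := by
      intro x
      rw [← real_inner_self_eq_norm_sq, hinner, hdiag x a]
    have hτnn : 0 ≤ t * E a a := (hnorm a) ▸ sq_nonneg ‖sphEmb E a‖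
    have hτpos : 0 < t * E a a := by
      rcases hτnn.lt_or_eq with h | h
      · exact h
      · exfalso
        have hz : ∀ x : X, sphEmb E x = 0 := by
          intro x
          have h2 : ‖sphEmb E x‖ ^ 2 = 0 := by rw [hnorm, ← h]
          exact norm_eq_zero.mp (sq_eq_zero_iff.mp h2)
        exact hσne a (hFaithful ((hz (σ a)).trans (hz a).symm))
    have hαval : α = -(t * E a a) := by
      have h := (hsub a (σ a) (hRa a)).2
      rw [hinner] at h
      have hneg : E a (σ a) = -E a a := by
        have h1 := hmulA E a a
        rw [hEA] at h1
        simpa using h1.symm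
      rw [hneg] at h
      rw [← h]; ring
    have hanti : ∀ x y : X, x ≠ y → sphEmb E x = -sphEmb E y := by
      intro x y hxy
      have h1 : ⟪sphEmb E x, sphEmb E y⟫ ≤ -(t * E a a) := by
        have := hα.2 ⟨x, y, hxy, rfl⟩
        rwa [hαval] at this
      have hnx : ‖sphEmb E x‖ = Real.sqrt (t * E a a) := by
        rw [← Real.sqrt_sq (norm_nonneg _), hnorm]
      have hny : ‖-sphEmb E y‖ = Real.sqrt (t * E a a) := by
        rw [norm_neg, ← Real.sqrt_sq (norm_nonneg _), hnorm]
      have h2 := real_inner_le_norm (sphEmb E x) (-sphEmb E y)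
      rw [inner_neg_right, hnx, hny, Real.mul_self_sqrt hτnn] at h2
      have heq : ⟪sphEmb E x, -sphEmb E y⟫ = ‖sphEmb E x‖ * ‖-sphEmb E y‖ := by
        rw [inner_neg_right, hnx, hny, Real.mul_self_sqrt hτnn]
        linarith
      have h3 := (inner_eq_norm_mul_iff_real).mp heq
      rw [hnx, hny] at h3
      exact smul_right_injective _ (ne_of_gt (Real.sqrt_pos.mpr hτpos)) h3
    have hall : ∀ z : X, z = a ∨ z = σ a := by
      intro z
      by_cases h1 : z = a
      · exact Or.inl h1
      · right
        exact hFaithful ((hanti z a h1).trans (hanti (σ a) a (hσne a)).symm)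
    have huniv : (Finset.univ : Finset X) = {a, σ a} := by
      ext z
      simp only [Finset.mem_univ, Finset.mem_insert, Finset.mem_singleton, true_iff]
      exact hall z
    rw [← Finset.card_univ, huniv,
      Finset.card_insert_of_notMem (by simpa using (hσne a).symm), Finset.card_singleton]
  · -- case F = E : E A₁ = E, contradiction with faithfulness
    exfalso
    have hEA : E * S.adj 1 = E := by
      linear_combination (norm := module) (2 : ℝ) • hFE
    have : sphEmb E (σ a) = sphEmb E a := by
      unfold sphEmb
      congr 1
      funext y
      have h1 := hmulA E y a
      rw [hEA] at h1
      rw [← h1]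
    exact hσne a (hFaithful this)
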